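/- In the example, for every T > 0 one has v_T(b_s) ≥ 1/2 for all s > 0, with equality attained at s = 2/T; consequently inf_{s>0} v_T(b_s) = 1/2 and V[v_T](0,0,0) = 1/2 for all T > 0. -/

import Mathlib

open MeasureTheory Set Filter Topology

noncomputable section

/-- Concatenation `z ⋄_h z'` of two processes at time `h`:
`(z ⋄_h z')(t) = z(t)` for `t < h` and `(z ⋄_h z')(t) = z'(t - h)` for `t ≥ h`. -/
def concat {Ω : Type*} (z z' : ℝ → Ω) (h : ℝ) : ℝ → Ω :=
  fun t => if t < h then z t else z' (t - h)

/-- The time average `v_T(z) = (1/T) ∫₀^T g(z(t)) dt`. -/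
def timeAvg {Ω : Type*} (g : Ω → ℝ) (T : ℝ) (z : ℝ → Ω) : ℝ :=
  (1 / T) * ∫ t in Ioc (0 : ℝ) T, g (z t)

/-- The discounted average `w_λ(z) = λ ∫₀^∞ e^{-λ t} g(z(t)) dt`. -/
def discAvg {Ω : Type*} (g : Ω → ℝ) (lam : ℝ) (z : ℝ → Ω) : ℝ :=
  lam * ∫ t in Ioi (0 : ℝ), Real.exp (-lam * t) * g (z t)

/-- The value function `V[J](ω) = inf { J(z) : z ∈ K, z(0) = ω }`. -/
def Val {Ω : Type*} (K : Set (ℝ → Ω)) (J : (ℝ → Ω) → ℝ) (ω : Ω) : ℝ :=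
  sInf (J '' {z ∈ K | z 0 = ω})

/-- The state space `Ω = ℝ_{≥0} × ℝ_{≥0} × ℝ_{≥0}` of the example,
realized as a subset of `ℝ × ℝ × ℝ`. -/
def Omega3 : Set (ℝ × ℝ × ℝ) := {p | 0 ≤ p.1 ∧ 0 ≤ p.2.1 ∧ 0 ≤ p.2.2}

/-- The running cost of the example: `g(x,y,r) = 0` if `x ∈ [1,2]` and `r = 0`,
and `g(x,y,r) = 1` otherwise. -/
def gex : ℝ × ℝ × ℝ → ℝ := fun p => if p.1 ∈ Icc (1 : ℝ) 2 ∧ p.2.2 = 0 then 0 else 1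

/-- The process `a_ω(t) = (x, y, t + r)` for `ω = (x, y, r)`. -/
def aproc (ω : ℝ × ℝ × ℝ) : ℝ → ℝ × ℝ × ℝ := fun t => (ω.1, ω.2.1, t + ω.2.2)

/-- The process `b_s(t) = (s t, t, 0)`. -/
def bproc (s : ℝ) : ℝ → ℝ × ℝ × ℝ := fun t => (s * t, t, 0)

/-- The set `K` of feasible processes of the example:
`K = {a_ω : ω ∈ Ω} ∪ {b_s : s ≥ 0} ∪ {b_s ⋄_τ a_{b_s(τ)} : s ≥ 0, τ > 0}`. -/
def Kex : Set (ℝ → ℝ × ℝ × ℝ) :=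
  {z | ∃ ω ∈ Omega3, z = aproc ω} ∪ {z | ∃ s : ℝ, 0 ≤ s ∧ z = bproc s} ∪
    {z | ∃ s : ℝ, 0 ≤ s ∧ ∃ τ : ℝ, 0 < τ ∧ z = concat (bproc s) (aproc (bproc s τ)) τ}

/-- In the example, for every `T > 0` one has `v_T(b_s) ≥ 1/2` for all `s > 0`,
with equality at `s = 2/T`; consequently `inf_{s>0} v_T(b_s) = 1/2` and
`V[v_T](0,0,0) = 1/2`. -/
lemma integral_form (T : ℝ) (hT : 0 < T) (E : Set ℝ) (hE : MeasurableSet E) :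
    ∫ t in Ioc (0:ℝ) T, (1 - E.indicator (fun _ => (1:ℝ)) t) =
      T - (volume (E ∩ Ioc (0:ℝ) T)).toReal := by
  have hfin : volume (Ioc (0:ℝ) T) < ⊤ := by
    rw [Real.volume_Ioc]; exact ENNReal.ofReal_lt_top
  have hint : Integrable (E.indicator (fun _ => (1:ℝ))) (volume.restrict (Ioc (0:ℝ) T)) := by
    rw [integrable_indicator_iff hE]
    refine integrableOn_const (ne_of_lt ?_) (by simp)
    rw [Measure.restrict_apply hE]
    exact lt_of_le_of_lt (measure_mono inter_subset_right) hfin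
  rw [integral_sub (integrable_const 1) hint, setIntegral_const,
    setIntegral_indicator hE, setIntegral_const, measureReal_def, measureReal_def, Real.volume_Ioc,
    inter_comm]
  simp [ENNReal.toReal_ofReal hT.le]

lemma gex_bproc (s t : ℝ) (hs : 0 ≤ s) (ht : 0 < t) :
    gex (bproc s t) = 1 - (Icc (1/s) (2/s)).indicator (fun _ => (1:ℝ)) t := by
  have key : (s * t ∈ Icc (1:ℝ) 2) ↔ t ∈ Icc (1/s) (2/s) := by
    rcases hs.eq_or_lt with rfl | hs
    · simp only [mem_Icc, zero_mul, div_zero]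
      constructor
      · rintro ⟨h1, _⟩; exfalso; linarith
      · rintro ⟨h1, h2⟩; exfalso; linarith
    · simp only [mem_Icc]
      rw [div_le_iff₀ hs, le_div_iff₀ hs]
      constructor <;> rintro ⟨h1, h2⟩ <;> constructor <;> nlinarith [mul_comm s t]
  simp only [gex, bproc, Set.indicator_apply, and_true]
  by_cases h : t ∈ Icc (1/s) (2/s)
  · rw [if_pos h, if_pos (key.2 h)]; norm_num
  · rw [if_neg h, if_neg (fun hc => h (key.1 hc))]; norm_num

lemma vol_bound (T s : ℝ) (hT : 0 < T) (hs : 0 ≤ s) :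
    volume (Icc (1/s) (2/s) ∩ Ioc 0 T) ≤ ENNReal.ofReal (T/2) := by
  rcases hs.eq_or_lt with rfl | hs
  · have hempty : Icc (1/(0:ℝ)) (2/0) ∩ Ioc 0 T = ∅ := by
      ext t
      simp only [mem_inter_iff, mem_Icc, mem_Ioc, mem_empty_iff_false, iff_false, not_and,
        div_zero, and_imp]
      intro _ h2 h3 _; linarith
    rw [hempty, measure_empty]; exact zero_le
  · have heq : Icc (1/s) (2/s) ∩ Ioc 0 T = Icc (1/s) (min (2/s) T) := by
      ext t
      simp only [mem_inter_iff, mem_Icc, mem_Ioc, le_min_iff]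
      constructor
      · rintro ⟨⟨h1, h2⟩, _, h4⟩; exact ⟨h1, h2, h4⟩
      · rintro ⟨h1, h2, h3⟩
        exact ⟨⟨h1, h2⟩, lt_of_lt_of_le (by positivity) h1, h3⟩
    rw [heq, Real.volume_Icc]
    apply ENNReal.ofReal_le_ofReal
    have h2s : 2/s = 2 * (1/s) := by ring
    rcases le_total (2/s) T with h | h
    · rw [min_eq_left h]; linarith
    · rw [min_eq_right h]; linarith

lemma vol_exact (T : ℝ) (hT : 0 < T) :
    volume (Icc (1/(2/T)) (2/(2/T)) ∩ Ioc 0 T) = ENNReal.ofReal (T/2) := by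
  have h1 : 1/(2/T) = T/2 := by rw [one_div_div]
  have h2 : 2/(2/T) = T := by field_simp
  rw [h1, h2]
  have : Icc (T/2) T ∩ Ioc 0 T = Icc (T/2) T := by
    refine inter_eq_left.2 (fun t ht => ⟨lt_of_lt_of_le (by linarith [ht.1]) ht.1, ht.2⟩)
  rw [this, Real.volume_Icc]
  congr 1; ring

lemma timeAvg_eq (T : ℝ) (hT : 0 < T) (E : Set ℝ) (hE : MeasurableSet E)
    (z : ℝ → ℝ × ℝ × ℝ)
    (hz : ∀ᵐ t ∂(volume.restrict (Ioc (0:ℝ) T)),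
      gex (z t) = 1 - E.indicator (fun _ => (1:ℝ)) t) :
    timeAvg gex T z = (1/T) * (T - (volume (E ∩ Ioc (0:ℝ) T)).toReal) := by
  unfold timeAvg
  rw [integral_congr_ae hz, integral_form T hT E hE]

lemma timeAvg_ge (T : ℝ) (hT : 0 < T) (E : Set ℝ) (hE : MeasurableSet E)
    (hvol : volume (E ∩ Ioc 0 T) ≤ ENNReal.ofReal (T/2))
    (z : ℝ → ℝ × ℝ × ℝ)
    (hz : ∀ᵐ t ∂(volume.restrict (Ioc (0:ℝ) T)),
      gex (z t) = 1 - E.indicator (fun _ => (1:ℝ)) t) :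
    1/2 ≤ timeAvg gex T z := by
  rw [timeAvg_eq T hT E hE z hz]
  have hle : (volume (E ∩ Ioc 0 T)).toReal ≤ T/2 := by
    have h := ENNReal.toReal_mono (by simp) hvol
    rwa [ENNReal.toReal_ofReal (by linarith)] at h
  have h1 : T/2 ≤ T - (volume (E ∩ Ioc 0 T)).toReal := by linarith
  calc (1:ℝ)/2 = (1/T) * (T/2) := by field_simp
  _ ≤ (1/T) * (T - (volume (E ∩ Ioc 0 T)).toReal) :=
      mul_le_mul_of_nonneg_left h1 (by positivity)

lemma ae_bproc (T s : ℝ) (hs : 0 ≤ s) :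
    ∀ᵐ t ∂(volume.restrict (Ioc (0:ℝ) T)),
      gex (bproc s t) = 1 - (Icc (1/s) (2/s)).indicator (fun _ => (1:ℝ)) t := by
  filter_upwards [ae_restrict_mem measurableSet_Ioc] with t ht
  exact gex_bproc s t hs ht.1

lemma half_le_timeAvg_bproc (T s : ℝ) (hT : 0 < T) (hs : 0 ≤ s) :
    1/2 ≤ timeAvg gex T (bproc s) :=
  timeAvg_ge T hT _ measurableSet_Icc (vol_bound T s hT hs) _ (ae_bproc T s hs)

lemma timeAvg_bproc_exact (T : ℝ) (hT : 0 < T) :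
    timeAvg gex T (bproc (2/T)) = 1/2 := by
  have hs : (0:ℝ) ≤ 2/T := by positivity
  rw [timeAvg_eq T hT _ measurableSet_Icc _ (ae_bproc T (2/T) hs), vol_exact T hT,
    ENNReal.toReal_ofReal (by linarith)]
  field_simp
  ring

lemma ae_ne (T τ : ℝ) : ∀ᵐ t ∂(volume.restrict (Ioc (0:ℝ) T)), t ≠ τ := by
  refine ae_restrict_of_ae ?_
  have h : {t : ℝ | ¬ t ≠ τ} = {τ} := by ext t; simp
  rw [ae_iff, h]
  exact measure_singleton τ

lemma half_le_timeAvg_concat (T s τ : ℝ) (hT : 0 < T) (hs : 0 ≤ s) (hτ : 0 < τ) :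
    1/2 ≤ timeAvg gex T (concat (bproc s) (aproc (bproc s τ)) τ) := by
  refine timeAvg_ge T hT (Icc (1/s) (2/s) ∩ Iio τ)
    (measurableSet_Icc.inter measurableSet_Iio) ?_ _ ?_
  · refine le_trans (measure_mono ?_) (vol_bound T s hT hs)
    exact inter_subset_inter_left _ inter_subset_left
  · filter_upwards [ae_restrict_mem measurableSet_Ioc, ae_ne T τ] with t ht htτ
    rcases lt_or_gt_of_ne htτ with hlt | hgt
    · have h1 : concat (bproc s) (aproc (bproc s τ)) τ t = bproc s t := if_pos hlt
      rw [h1, gex_bproc s t hs ht.1]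
      congr 1
      by_cases h : t ∈ Icc (1/s) (2/s)
      · rw [Set.indicator_of_mem h, Set.indicator_of_mem (show t ∈ Icc (1/s) (2/s) ∩ Iio τ from ⟨h, hlt⟩)]
      · rw [Set.indicator_of_notMem h,
          Set.indicator_of_notMem (fun hc => h hc.1)]
    · have h1 : concat (bproc s) (aproc (bproc s τ)) τ t = (s * τ, τ, (t - τ) + 0) :=
        if_neg (not_lt.2 hgt.le)
      rw [h1]
      have h2 : gex (s * τ, τ, (t - τ) + 0) = 1 := by
        have hne : (t - τ) + 0 ≠ 0 := by simp; linarith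
        simp only [gex]
        rw [if_neg]
        rintro ⟨_, hc⟩
        exact hne hc
      rw [h2, Set.indicator_of_notMem (fun hc => absurd hc.2 (not_lt.2 hgt.le))]
      norm_num

lemma half_le_timeAvg_aproc (T : ℝ) (hT : 0 < T) (ω : ℝ × ℝ × ℝ) (hω1 : ω.1 = 0) :
    1/2 ≤ timeAvg gex T (aproc ω) := by
  refine timeAvg_ge T hT ∅ MeasurableSet.empty (by simp) _ ?_
  refine Eventually.of_forall (fun t => ?_)
  have : ¬ ((aproc ω t).1 ∈ Icc (1:ℝ) 2 ∧ (aproc ω t).2.2 = 0) := by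
    rintro ⟨h1, _⟩
    rw [aproc] at h1
    simp only [hω1, mem_Icc] at h1
    linarith [h1.1]
  simp [gex, this, aproc] at *
  tauto

theorem val_time_origin (T : ℝ) (hT : 0 < T) :
    (∀ s : ℝ, 0 < s → 1 / 2 ≤ timeAvg gex T (bproc s)) ∧
    timeAvg gex T (bproc (2 / T)) = 1 / 2 ∧
    sInf ((fun s => timeAvg gex T (bproc s)) '' Ioi (0 : ℝ)) = 1 / 2 ∧
    Val Kex (timeAvg gex T) (0, 0, 0) = 1 / 2 := by
  have hmain : ∀ s : ℝ, 0 ≤ s → 1 / 2 ≤ timeAvg gex T (bproc s) :=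
    fun s hs => half_le_timeAvg_bproc T s hT hs
  have hexact : timeAvg gex T (bproc (2 / T)) = 1 / 2 := timeAvg_bproc_exact T hT
  refine ⟨fun s hs => hmain s hs.le, hexact, ?_, ?_⟩
  · apply le_antisymm
    · refine csInf_le ⟨1/2, ?_⟩ ?_
      · rintro x ⟨s, hs, rfl⟩; exact hmain s (le_of_lt hs)
      · exact ⟨2/T, by simp [mem_Ioi]; positivity, hexact⟩
    · refine le_csInf ⟨timeAvg gex T (bproc (2/T)), 2/T, by simp [mem_Ioi]; positivity, rfl⟩ ?_
      rintro x ⟨s, hs, rfl⟩; exact hmain s (le_of_lt hs)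
  · have hb0 : bproc (2/T) 0 = ((0:ℝ), (0:ℝ), (0:ℝ)) := by simp [bproc]
    have hbK : bproc (2/T) ∈ Kex := Or.inl (Or.inr ⟨2/T, by positivity, rfl⟩)
    have hlow : ∀ x ∈ (timeAvg gex T) '' {z ∈ Kex | z 0 = ((0:ℝ), (0:ℝ), (0:ℝ))}, 1/2 ≤ x := by
      rintro x ⟨z, ⟨hzK, hz0⟩, rfl⟩
      rcases hzK with (⟨ω, hω, rfl⟩ | ⟨s, hs, rfl⟩) | ⟨s, hs, τ, hτ, rfl⟩
      · apply half_le_timeAvg_aproc T hT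
        have := congrArg Prod.fst hz0
        simpa [aproc] using this
      · exact hmain s hs
      · exact half_le_timeAvg_concat T s τ hT hs hτ
    unfold Val
    apply le_antisymm
    · refine csInf_le ⟨1/2, hlow⟩ ?_
      exact ⟨bproc (2/T), ⟨hbK, hb0⟩, hexact⟩
    · exact le_csInf ⟨timeAvg gex T (bproc (2/T)), bproc (2/T), ⟨hbK, hb0⟩, rfl⟩ hlow
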